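/- Let A be a Frobenius category and P its full subcategory of projective objects. For every object A of A, the P-module h_A = Hom_A(−, A)|_P is a Cohen-Macaulay P-module. -/

import Mathlib

universe v u

open CategoryTheory Limits

namespace Paper

variable {A : Type u} [Category.{v} A]

section Defs
variable [Preadditive A]

/-- `i` is a kernel of `d`. -/
def IsKer {X Y Z : A} (i : X ⟶ Y) (d : Y ⟶ Z) : Prop :=
  i ≫ d = 0 ∧ ∀ ⦃W : A⦄ (g : W ⟶ Y), g ≫ d = 0 → ∃! g' : W ⟶ X, g' ≫ i = g

/-- `d` is a cokernel of `i`. -/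
def IsCoker {X Y Z : A} (i : X ⟶ Y) (d : Y ⟶ Z) : Prop :=
  i ≫ d = 0 ∧ ∀ ⦃W : A⦄ (g : Y ⟶ W), i ≫ g = 0 → ∃! g' : Z ⟶ W, d ≫ g' = g

/-- An exact structure in the sense of Quillen (following Keller's axioms) on an
additive category `A`: a class of kernel-cokernel pairs (conflations), closed under
isomorphism, satisfying the axioms (Ex0), (Ex1), (Ex1op), (Ex2), (Ex2op). -/
structure ExactStructure (A : Type u) [Category.{v} A] [Preadditive A] where
  /-- the class of conflations `X ⟶ Y ⟶ Z` -/
  IsConflation : ∀ ⦃X Y Z : A⦄, (X ⟶ Y) → (Y ⟶ Z) → Prop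
  ker_of_conflation : ∀ ⦃X Y Z : A⦄ {i : X ⟶ Y} {d : Y ⟶ Z}, IsConflation i d → IsKer i d
  coker_of_conflation : ∀ ⦃X Y Z : A⦄ {i : X ⟶ Y} {d : Y ⟶ Z}, IsConflation i d → IsCoker i d
  iso_closed : ∀ ⦃X Y Z X' Y' Z' : A⦄ {i : X ⟶ Y} {d : Y ⟶ Z} {i' : X' ⟶ Y'} {d' : Y' ⟶ Z'}
    (eX : X ≅ X') (eY : Y ≅ Y') (eZ : Z ≅ Z'),
    i ≫ eY.hom = eX.hom ≫ i' → d ≫ eZ.hom = eY.hom ≫ d' →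
    IsConflation i d → IsConflation i' d'
  ex0 : ∀ ⦃Z : A⦄, IsZero Z → ∃ (X : A) (i : X ⟶ Z), IsConflation i (𝟙 Z)
  ex1 : ∀ ⦃Y Z W : A⦄ {d : Y ⟶ Z} {e : Z ⟶ W},
    (∃ (X : A) (i : X ⟶ Y), IsConflation i d) → (∃ (X : A) (i : X ⟶ Z), IsConflation i e) →
    ∃ (X : A) (i : X ⟶ Y), IsConflation i (d ≫ e)
  ex1op : ∀ ⦃X Y W : A⦄ {i : X ⟶ Y} {j : Y ⟶ W},
    (∃ (Z : A) (d : Y ⟶ Z), IsConflation i d) → (∃ (Z : A) (d : W ⟶ Z), IsConflation j d) →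
    ∃ (Z : A) (d : W ⟶ Z), IsConflation (i ≫ j) d
  ex2 : ∀ ⦃Y Z Z' : A⦄ (d : Y ⟶ Z) (f : Z' ⟶ Z),
    (∃ (X : A) (i : X ⟶ Y), IsConflation i d) →
    ∃ (Y' : A) (d' : Y' ⟶ Z') (f' : Y' ⟶ Y),
      IsPullback d' f' f d ∧ ∃ (X : A) (i : X ⟶ Y'), IsConflation i d'
  ex2op : ∀ ⦃X Y X' : A⦄ (i : X ⟶ Y) (f : X ⟶ X'),
    (∃ (Z : A) (d : Y ⟶ Z), IsConflation i d) →
    ∃ (Y' : A) (i' : X' ⟶ Y') (f' : Y ⟶ Y'),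
      IsPushout i f f' i' ∧ ∃ (Z : A) (d : Y' ⟶ Z), IsConflation i' d

namespace ExactStructure

variable (E : ExactStructure A)

/-- `d` is a deflation. -/
def IsDeflation {Y Z : A} (d : Y ⟶ Z) : Prop :=
  ∃ (X : A) (i : X ⟶ Y), E.IsConflation i d

/-- `i` is an inflation. -/
def IsInflation {X Y : A} (i : X ⟶ Y) : Prop :=
  ∃ (Z : A) (d : Y ⟶ Z), E.IsConflation i d

/-- projective object: every deflation onto it splits. -/
def Proj (P : A) : Prop :=
  ∀ ⦃Y : A⦄ (d : Y ⟶ P), E.IsDeflation d → ∃ s : P ⟶ Y, s ≫ d = 𝟙 P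

/-- injective object: every inflation out of it splits. -/
def Inj (I : A) : Prop :=
  ∀ ⦃Y : A⦄ (i : I ⟶ Y), E.IsInflation i → ∃ r : Y ⟶ I, i ≫ r = 𝟙 I

/-- enough projective objects -/
def EnoughProj : Prop :=
  ∀ X : A, ∃ (P : A) (d : P ⟶ X), E.Proj P ∧ E.IsDeflation d

/-- enough injective objects -/
def EnoughInj : Prop :=
  ∀ X : A, ∃ (I : A) (i : X ⟶ I), E.Inj I ∧ E.IsInflation i

/-- A Frobenius category: enough projectives, enough injectives, and the two classes coincide. -/
structure IsFrobenius : Prop where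
  enoughProj : E.EnoughProj
  enoughInj : E.EnoughInj
  proj_iff_inj : ∀ P : A, E.Proj P ↔ E.Inj P

end ExactStructure

end Defs

end Paper
namespace Paper

open CategoryTheory Limits

section Modules

variable (C : Type u) [Category.{v} C] [Preadditive C]

/-- The category `Mod C` of (additive) contravariant functors from `C` to abelian
groups; a Cohen-Macaulay module is automatically additive, so we work in the ambient
functor category, which has the same Hom-groups. -/
abbrev ModC := Cᵒᵖ ⥤ AddCommGrpCat.{v}

/-- A `C`-module is finitely generated projective iff it is a direct summand of a
representable module `H_X = Hom_C(-, X)`. -/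
def IsFGProj (M : ModC C) : Prop :=
  ∃ (X : C) (s : M ⟶ preadditiveYoneda.obj X) (r : preadditiveYoneda.obj X ⟶ M),
    s ≫ r = 𝟙 M

/-- `0 ⟶ L ⟶u M ⟶v N ⟶ 0` is a short exact sequence of `C`-modules
(exactness is objectwise). -/
def IsSES {L M N : ModC C} (u : L ⟶ M) (v : M ⟶ N) : Prop :=
  ∀ c : Cᵒᵖ, Function.Injective (u.app c) ∧ Function.Surjective (v.app c) ∧
    ∀ x : M.obj c, (v.app c) x = 0 ↔ ∃ y : L.obj c, (u.app c) y = x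

/-- A totally acyclic complex: an acyclic complex of finitely generated projective
`C`-modules such that `Hom(P^•, H_X)` is acyclic for every object `X` of `C`. -/
structure IsTotallyAcyclic (P : ℤ → ModC C) (d : ∀ n : ℤ, P n ⟶ P (n + 1)) : Prop where
  fgProj : ∀ n, IsFGProj C (P n)
  comp_zero : ∀ n, d n ≫ d (n + 1) = 0
  acyclic : ∀ (n : ℤ) (c : Cᵒᵖ) (x : (P (n + 1)).obj c),
    ((d (n + 1)).app c) x = 0 → ∃ y : (P n).obj c, ((d n).app c) y = x
  hom_acyclic : ∀ (n : ℤ) (X : C) (g : P (n + 1) ⟶ preadditiveYoneda.obj X),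
    d n ≫ g = 0 → ∃ h : P (n + 1 + 1) ⟶ preadditiveYoneda.obj X, d (n + 1) ≫ h = g

/-- A `C`-module is (maximal) Cohen-Macaulay iff it is isomorphic to the `0`-th
cocycle `Z^0(P^•)` (i.e. the kernel of `d^0`) of some totally acyclic complex. -/
def IsCM (M : ModC C) : Prop :=
  ∃ (P : ℤ → ModC C) (d : ∀ n : ℤ, P n ⟶ P (n + 1)), IsTotallyAcyclic C P d ∧
    ∃ ι : M ⟶ P 0, ι ≫ d 0 = 0 ∧ ∀ c : Cᵒᵖ,
      Function.Injective (ι.app c) ∧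
      ∀ x : (P 0).obj c, ((d 0).app c) x = 0 → ∃ m : M.obj c, (ι.app c) m = x

end Modules

section ResYoneda

variable {A : Type u} [Category.{v} A] [Preadditive A]

/-- The full subcategory `P` of projective objects of `(A, E)`. -/
abbrev ProjCat (E : ExactStructure A) := ObjectProperty.FullSubcategory (fun P : A => E.Proj P)

/-- The restricted Yoneda functor `h : A ⥤ Mod P`, sending `X` to
`h_X = Hom_A(-, X)|_P`. -/
def resYoneda (E : ExactStructure A) : A ⥤ ModC (ProjCat E) :=
  preadditiveYoneda ⋙
    (Functor.whiskeringLeft (ProjCat E)ᵒᵖ Aᵒᵖ AddCommGrpCat.{v}).obj (ObjectProperty.ι _).op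

end ResYoneda

end Paper
namespace Paper

open CategoryTheory Limits

section AuxProof

variable {A : Type u} [Category.{v} A] [Preadditive A]

lemma IsKer.mono_aux {X Y Z : A} {i : X ⟶ Y} {d : Y ⟶ Z} (h : IsKer i d)
    {W : A} {a b : W ⟶ X} (hab : a ≫ i = b ≫ i) : a = b := by
  obtain ⟨h0, hu⟩ := h
  obtain ⟨c, -, hcu⟩ := hu (a ≫ i) (by rw [Category.assoc, h0, comp_zero])
  rw [hcu a rfl, hcu b hab.symm]

lemma IsCoker.epi_aux {X Y Z : A} {i : X ⟶ Y} {d : Y ⟶ Z} (h : IsCoker i d)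
    {W : A} {a b : Z ⟶ W} (hab : d ≫ a = d ≫ b) : a = b := by
  obtain ⟨h0, hu⟩ := h
  obtain ⟨c, -, hcu⟩ := hu (d ≫ a) (by rw [← Category.assoc, h0, zero_comp])
  rw [hcu a rfl, hcu b hab.symm]

variable (E : ExactStructure A)

lemma defl_lift {Y Z : A} {d : Y ⟶ Z} (hd : E.IsDeflation d) {P : A} (hP : E.Proj P)
    (g : P ⟶ Z) : ∃ s : P ⟶ Y, s ≫ d = g := by
  obtain ⟨Y', d', f', hpb, hd'⟩ := E.ex2 d g hd
  obtain ⟨s, hs⟩ := hP d' hd'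
  refine ⟨s ≫ f', ?_⟩
  rw [Category.assoc, ← hpb.w, ← Category.assoc, hs, Category.id_comp]

lemma inj_extend {I : A} (hI : E.Inj I) {K M : A} {j : K ⟶ M} (hj : E.IsInflation j)
    (g : K ⟶ I) : ∃ h : M ⟶ I, j ≫ h = g := by
  obtain ⟨W, i', f', hpo, hi'⟩ := E.ex2op j g hj
  obtain ⟨r, hr⟩ := hI i' hi'
  refine ⟨f' ≫ r, ?_⟩
  rw [← Category.assoc, hpo.w, Category.assoc, hr, Category.comp_id]

/-- forward step: embed `Y` into a projective-injective with cokernel `next`. -/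
structure StepF (Y : A) where
  mid : A
  next : A
  ι : Y ⟶ mid
  π : mid ⟶ next
  proj : E.Proj mid
  confl : E.IsConflation ι π

/-- backward step: cover `Y` by a projective with kernel `prev`. -/
structure CoStepF (Y : A) where
  mid : A
  prev : A
  ι : prev ⟶ mid
  π : mid ⟶ Y
  proj : E.Proj mid
  confl : E.IsConflation ι π

variable (hE : E.IsFrobenius)
include hE

lemma stepF_nonempty (Y : A) : Nonempty (StepF E Y) := by
  obtain ⟨I, i, hI, hinf⟩ := hE.enoughInj Y
  obtain ⟨Z, dd, hc⟩ := hinf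
  exact ⟨⟨I, Z, i, dd, (hE.proj_iff_inj I).mpr hI, hc⟩⟩

lemma costepF_nonempty (Y : A) : Nonempty (CoStepF E Y) := by
  obtain ⟨Q, dd, hQ, hdef⟩ := hE.enoughProj Y
  obtain ⟨N, i, hc⟩ := hdef
  exact ⟨⟨Q, N, i, dd, hQ, hc⟩⟩

noncomputable def stepOf (Y : A) : StepF E Y := Classical.choice (stepF_nonempty E hE Y)
noncomputable def costepOf (Y : A) : CoStepF E Y := Classical.choice (costepF_nonempty E hE Y)

variable (X : A)

noncomputable def Kseq : ℕ → A
  | 0 => X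
  | n + 1 => (stepOf E hE (Kseq n)).next

noncomputable def Lseq : ℕ → A
  | 0 => X
  | n + 1 => (costepOf E hE (Lseq n)).prev

/-- the cocycle objects of the complete resolution, indexed by `ℤ`. -/
noncomputable def Cse : ℤ → A
  | .ofNat k => Kseq E hE X k
  | .negSucc k => Lseq E hE X (k + 1)

/-- segment data: conflation `C n ⟶ T ⟶ C (n+1)` with projective middle. -/
structure SegT (n : ℤ) where
  T : A
  α : Cse E hE X n ⟶ T
  β : T ⟶ Cse E hE X (n + 1)
  proj : E.Proj T
  confl : E.IsConflation α β

lemma segT_nonempty (n : ℤ) : Nonempty (SegT E hE X n) := by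
  match n with
  | .ofNat k =>
    exact ⟨⟨(stepOf E hE (Kseq E hE X k)).mid, (stepOf E hE (Kseq E hE X k)).ι,
      (stepOf E hE (Kseq E hE X k)).π, (stepOf E hE (Kseq E hE X k)).proj,
      (stepOf E hE (Kseq E hE X k)).confl⟩⟩
  | .negSucc 0 =>
    exact ⟨⟨(costepOf E hE (Lseq E hE X 0)).mid, (costepOf E hE (Lseq E hE X 0)).ι,
      (costepOf E hE (Lseq E hE X 0)).π, (costepOf E hE (Lseq E hE X 0)).proj,
      (costepOf E hE (Lseq E hE X 0)).confl⟩⟩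
  | .negSucc (k + 1) =>
    exact ⟨⟨(costepOf E hE (Lseq E hE X (k + 1))).mid, (costepOf E hE (Lseq E hE X (k + 1))).ι,
      (costepOf E hE (Lseq E hE X (k + 1))).π, (costepOf E hE (Lseq E hE X (k + 1))).proj,
      (costepOf E hE (Lseq E hE X (k + 1))).confl⟩⟩

noncomputable def segOf (n : ℤ) : SegT E hE X n := Classical.choice (segT_nonempty E hE X n)

noncomputable abbrev Tob (n : ℤ) : A := (segOf E hE X n).T
noncomputable abbrev alf (n : ℤ) : Cse E hE X n ⟶ Tob E hE X n := (segOf E hE X n).α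
noncomputable abbrev bet (n : ℤ) : Tob E hE X n ⟶ Cse E hE X (n + 1) := (segOf E hE X n).β
noncomputable abbrev dA (n : ℤ) : Tob E hE X n ⟶ Tob E hE X (n + 1) :=
  bet E hE X n ≫ alf E hE X (n + 1)

lemma alf_mono (n : ℤ) {W : A} {a b : W ⟶ Cse E hE X n}
    (h : a ≫ alf E hE X n = b ≫ alf E hE X n) : a = b :=
  IsKer.mono_aux (E.ker_of_conflation (segOf E hE X n).confl) h

lemma bet_epi (n : ℤ) {W : A} {a b : Cse E hE X (n + 1) ⟶ W}
    (h : bet E hE X n ≫ a = bet E hE X n ≫ b) : a = b :=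
  IsCoker.epi_aux (E.coker_of_conflation (segOf E hE X n).confl) h

lemma alf_bet_zero (n : ℤ) : alf E hE X n ≫ bet E hE X n = 0 :=
  (E.ker_of_conflation (segOf E hE X n).confl).1

lemma bet_defl (n : ℤ) : E.IsDeflation (bet E hE X n) :=
  ⟨_, _, (segOf E hE X n).confl⟩

lemma alf_infl (n : ℤ) : E.IsInflation (alf E hE X n) :=
  ⟨_, _, (segOf E hE X n).confl⟩

lemma dA_comp_zero (n : ℤ) : dA E hE X n ≫ dA E hE X (n + 1) = 0 := by
  show (bet E hE X n ≫ alf E hE X (n + 1)) ≫ bet E hE X (n + 1) ≫ alf E hE X (n + 1 + 1) = 0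
  rw [Category.assoc, ← Category.assoc (alf E hE X (n + 1)), alf_bet_zero, zero_comp,
    comp_zero]

lemma acyclic_A (n : ℤ) {P : A} (hP : E.Proj P) (f : P ⟶ Tob E hE X (n + 1))
    (hf : f ≫ dA E hE X (n + 1) = 0) : ∃ y : P ⟶ Tob E hE X n, y ≫ dA E hE X n = f := by
  have h1 : f ≫ bet E hE X (n + 1) = 0 := by
    apply alf_mono E hE X (n + 1 + 1)
    rw [zero_comp, Category.assoc]
    exact hf
  obtain ⟨y', hy', -⟩ := (E.ker_of_conflation (segOf E hE X (n + 1)).confl).2 f h1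
  obtain ⟨y, hy⟩ := defl_lift E (bet_defl E hE X n) hP y'
  refine ⟨y, ?_⟩
  show y ≫ bet E hE X n ≫ alf E hE X (n + 1) = f
  rw [← Category.assoc, hy, hy']

lemma homacyc_A (n : ℤ) {Q : A} (hQ : E.Proj Q) (g : Tob E hE X (n + 1) ⟶ Q)
    (hg : dA E hE X n ≫ g = 0) :
    ∃ h : Tob E hE X (n + 1 + 1) ⟶ Q, dA E hE X (n + 1) ≫ h = g := by
  have h1 : alf E hE X (n + 1) ≫ g = 0 := by
    apply bet_epi E hE X n
    rw [comp_zero, ← Category.assoc]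
    exact hg
  obtain ⟨gbar, hgbar, -⟩ := (E.coker_of_conflation (segOf E hE X (n + 1)).confl).2 g h1
  obtain ⟨h, hh⟩ := inj_extend E ((hE.proj_iff_inj Q).mp hQ)
    (alf_infl E hE X (n + 1 + 1)) gbar
  refine ⟨h, ?_⟩
  show (bet E hE X (n + 1) ≫ alf E hE X (n + 1 + 1)) ≫ h = g
  rw [Category.assoc, hh, hgbar]

omit hE in
lemma resYoneda_map_zero (Y Z : A) :
    (resYoneda E).map (0 : Y ⟶ Z) = 0 := by
  apply NatTrans.ext
  funext c
  refine AddCommGrpCat.ext fun f => ?_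
  show (show c.unop.obj ⟶ Y from f) ≫ (0 : Y ⟶ Z) = (0 : c.unop.obj ⟶ Z)
  exact comp_zero

omit hE in
/-- `h_P` is the representable module `H_P` for `P` projective. -/
noncomputable def yIso (P : ProjCat E) : (resYoneda E).obj P.obj ≅ preadditiveYoneda.obj P :=
  NatIso.ofComponents
    (fun c => AddEquiv.toAddCommGrpIso
      { toFun := fun f => InducedCategory.homMk f
        invFun := fun f => f.hom
        left_inv := fun _ => rfl
        right_inv := fun _ => rfl
        map_add' := fun _ _ => rfl })
    (by intros; rfl)

end AuxProof

/-- **Theorem (Step 1 of Theorem 4.2).** For a Frobenius category `A` with subcategory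
of projectives `P`, the restricted Yoneda functor takes values in Cohen-Macaulay
`P`-modules: `h_X` is Cohen-Macaulay for every object `X` of `A`. -/
theorem resYoneda_isCM
    {A : Type u} [Category.{v} A] [Preadditive A] [HasZeroObject A] [HasBinaryBiproducts A]
    (E : ExactStructure A) (hE : E.IsFrobenius) (X : A) :
    IsCM (ProjCat E) ((resYoneda E).obj X) := by
  classical
  refine ⟨fun n => (resYoneda E).obj (Tob E hE X n),
    fun n => (resYoneda E).map (dA E hE X n),
    ⟨?_, ?_, ?_, ?_⟩,
    (resYoneda E).map (show X ⟶ Tob E hE X 0 from alf E hE X 0), ?_, ?_⟩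
  · -- fgProj
    intro n
    exact ⟨⟨Tob E hE X n, (segOf E hE X n).proj⟩,
      (yIso E ⟨Tob E hE X n, (segOf E hE X n).proj⟩).hom,
      (yIso E ⟨Tob E hE X n, (segOf E hE X n).proj⟩).inv, by simp⟩
  · -- comp_zero
    intro n
    rw [← Functor.map_comp, dA_comp_zero, resYoneda_map_zero]
  · -- acyclic
    intro n c x hx
    obtain ⟨y, hy⟩ := acyclic_A E hE X n c.unop.property
      (show c.unop.obj ⟶ Tob E hE X (n + 1) from x) hx
    exact ⟨y, hy⟩
  · -- hom_acyclic
    intro n Xp g hg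
    let P1 : ProjCat E := ⟨Tob E hE X (n + 1), (segOf E hE X (n + 1)).proj⟩
    let gA : Tob E hE X (n + 1) ⟶ Xp.obj :=
      (g.app (Opposite.op P1) (show P1.obj ⟶ Tob E hE X (n + 1) from 𝟙 _)).hom
    have key : ∀ (c : (ProjCat E)ᵒᵖ) (f : c.unop.obj ⟶ Tob E hE X (n + 1)),
        (g.app c f).hom = f ≫ gA := by
      intro c f
      have h1 := g.naturality ((InducedCategory.homMk f : c.unop ⟶ P1).op)
      have h2 := congrArg
        (fun t => (t (show P1.obj ⟶ Tob E hE X (n + 1) from 𝟙 _)).hom) h1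
      have h4 : (g.app c (f ≫ 𝟙 (Tob E hE X (n + 1)))).hom = f ≫ gA := h2
      rw [Category.comp_id] at h4
      exact h4
    have hg0 : dA E hE X n ≫ gA = 0 := by
      let P0 : ProjCat E := ⟨Tob E hE X n, (segOf E hE X n).proj⟩
      have e1 := congrArg
        (fun (t : (resYoneda E).obj (Tob E hE X n) ⟶ preadditiveYoneda.obj Xp) =>
          t.app (Opposite.op P0) (show P0.obj ⟶ Tob E hE X n from 𝟙 _)) hg
      have e2 : g.app (Opposite.op P0) (𝟙 (Tob E hE X n) ≫ dA E hE X n) = 0 := e1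
      have e3 : g.app (Opposite.op P0) (dA E hE X n) = 0 :=
        (congrArg (fun t : Tob E hE X n ⟶ Tob E hE X (n + 1) =>
          g.app (Opposite.op P0) t)
          (Category.id_comp (dA E hE X n))).symm.trans e2
      exact (key (Opposite.op P0) (dA E hE X n)).symm.trans
        ((congrArg InducedCategory.Hom.hom e3).trans rfl)
    obtain ⟨hA, hhA⟩ := homacyc_A E hE X n Xp.property gA hg0
    refine ⟨(resYoneda E).map hA ≫ (yIso E Xp).hom, ?_⟩
    apply NatTrans.ext
    funext c
    refine AddCommGrpCat.ext fun f => ?_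
    apply ObjectProperty.hom_ext
    rw [key c f]
    show ((show c.unop.obj ⟶ Tob E hE X (n + 1) from f) ≫ dA E hE X (n + 1)) ≫ hA =
      (show c.unop.obj ⟶ Tob E hE X (n + 1) from f) ≫ gA
    rw [Category.assoc, hhA]
  · -- ι ≫ d 0 = 0
    rw [← Functor.map_comp]
    have h0 : (show X ⟶ Tob E hE X 0 from alf E hE X 0) ≫ dA E hE X 0 = 0 := by
      show alf E hE X 0 ≫ bet E hE X 0 ≫ alf E hE X (0 + 1) = 0
      rw [← Category.assoc, alf_bet_zero, zero_comp]
    rw [h0, resYoneda_map_zero]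
  · -- injectivity and kernel property of ι
    intro c
    constructor
    · intro x y h
      have h' : (show c.unop.obj ⟶ Cse E hE X 0 from x) ≫ alf E hE X 0 =
          (show c.unop.obj ⟶ Cse E hE X 0 from y) ≫ alf E hE X 0 := h
      exact alf_mono E hE X 0 h'
    · intro x hx
      have hx' : (show c.unop.obj ⟶ Tob E hE X 0 from x) ≫ bet E hE X 0 = 0 := by
        apply alf_mono E hE X (0 + 1)
        rw [zero_comp, Category.assoc]
        exact hx
      obtain ⟨m, hm, -⟩ := (E.ker_of_conflation (segOf E hE X 0).confl).2 _ hx'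
      exact ⟨m, hm⟩

end Paper
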